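/- Let Θ_n=S_n≡Θ=ℝ^p and let 𝓜_n=(M_n,id) be a non-random Markov chain Monte Carlo procedure where M_n is the Markov measure generated by initial distribution μ_n and transition kernel K_n(x,dy)=A_n(x)R_n(x,dy)+(1−A_n(x))δ_x(dy), with R_n a probability transition kernel on Θ and A_n:Θ→(0,1) measurable. If (μ_n; n=1,2,…) is tight and sup_{x∈K}R_n(x,B_ε(x)^c)→0 as n→∞ for every compact set K⊂Θ and every ε>0, then (𝓜_n; n=1,2,…) is degenerate. -/

import Mathlib

open MeasureTheory ProbabilityTheory Filter
open scoped ENNReal Topology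

noncomputable section

/-- The bounded Lipschitz distance between two measures on a pseudometric space. -/
def blDist {α : Type*} [MeasurableSpace α] [PseudoMetricSpace α]
    (μ ν : Measure α) : ℝ :=
  ⨆ f : {f : α → ℝ // LipschitzWith 1 f ∧ ∀ x, |f x| ≤ 1},
    |∫ x, f.1 x ∂μ - ∫ x, f.1 x ∂ν|

/-- The empirical measure `m⁻¹ ∑_{i<m} δ_{s(i)}` of the first `m` terms of a sequence. -/
def empMeas {Θ : Type*} [MeasurableSpace Θ] (m : ℕ) (s : ℕ → Θ) : Measure Θ :=
  (m : ℝ≥0∞)⁻¹ • ∑ i ∈ Finset.range m, Measure.dirac (s i)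

/-- `M` is the Markov measure on the path space generated by the initial distribution `μ`
and the transition (kernel) `K`: the first coordinate has law `μ`, and the chain has the
Markov property with one-step transition `K`. -/
def IsMarkovMeasureF {S : Type*} [MeasurableSpace S] (M : Measure (ℕ → S))
    (μ : Measure S) (K : S → Measure S) : Prop :=
  M.map (fun s => s 0) = μ ∧
  ∀ (m : ℕ) (B : Set (Fin (m + 1) → S)), MeasurableSet B →
    ∀ (A : Set S), MeasurableSet A →
      M {s | (fun i : Fin (m + 1) => s i.1) ∈ B ∧ s (m + 1) ∈ A}
        = ∫⁻ s in {s | (fun i : Fin (m + 1) => s i.1) ∈ B}, K (s m) A ∂M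

/-- Tightness of a sequence of measures. -/
def TightSeq {α : Type*} [MeasurableSpace α] [TopologicalSpace α]
    (μ : ℕ → Measure α) : Prop :=
  ∀ ε : ℝ, 0 < ε → ∃ K : Set α, IsCompact K ∧ ∀ n, μ n Kᶜ ≤ ENNReal.ofReal ε

section
variable {Θ : Type*} [MeasurableSpace Θ] [PseudoMetricSpace Θ] [MeasurableSingletonClass Θ]

lemma integrable_dirac' {f : Θ → ℝ} (a : Θ) : Integrable f (Measure.dirac a) := by
  constructor
  · refine (aestronglyMeasurable_const (b := f a)).congr ?_
    rw [MeasureTheory.ae_dirac_eq]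
    exact Filter.eventually_pure.2 rfl
  · rw [HasFiniteIntegral, MeasureTheory.lintegral_dirac]
    exact ENNReal.coe_lt_top

lemma integral_empMeas (m : ℕ) (s : ℕ → Θ) (f : Θ → ℝ) :
    ∫ x, f x ∂(empMeas m s) = (m : ℝ)⁻¹ * ∑ i ∈ Finset.range m, f (s i) := by
  rw [empMeas, integral_smul_measure,
    integral_finset_sum_measure (fun i _ => integrable_dirac' (s i))]
  simp [MeasureTheory.integral_dirac, ENNReal.toReal_inv, smul_eq_mul]

lemma min_add_le (a b c : ℝ) (ha : 0 ≤ a) (hb : 0 ≤ b) (hc : 0 ≤ c) :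
    min (a + b) c ≤ min a c + min b c := by
  rcases le_total c a with h | h
  · calc min (a+b) c ≤ c := min_le_right _ _
    _ ≤ min a c + min b c := by
        rw [min_eq_right h]; nlinarith [le_min hb hc, le_min ha hc]
  · rcases le_total c b with h' | h'
    · calc min (a+b) c ≤ c := min_le_right _ _
      _ ≤ min a c + min b c := by
          rw [min_eq_right h']
          have : (0:ℝ) ≤ min a c := le_min ha hc
          linarith
    · rw [min_eq_left h, min_eq_left h']; exact min_le_left _ _

lemma min_dist_le_sum (s : ℕ → Θ) (i : ℕ) :
    min (dist (s i) (s 0)) 2 ≤ ∑ j ∈ Finset.range i, min (dist (s (j+1)) (s j)) 2 := by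
  induction i with
  | zero => simp
  | succ i ih =>
    rw [Finset.sum_range_succ]
    calc min (dist (s (i+1)) (s 0)) 2
        ≤ min (dist (s i) (s 0) + dist (s (i+1)) (s i)) (2:ℝ) := by
          have h := dist_triangle (s (i+1)) (s i) (s 0)
          exact min_le_min (by linarith) le_rfl
      _ ≤ min (dist (s i) (s 0)) 2 + min (dist (s (i+1)) (s i)) 2 :=
          min_add_le _ _ _ dist_nonneg dist_nonneg (by norm_num)
      _ ≤ _ := by gcongr

instance : Nonempty {f : Θ → ℝ // LipschitzWith 1 f ∧ ∀ x, |f x| ≤ 1} :=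
  ⟨⟨fun _ => 0, (LipschitzWith.const 0).weaken zero_le_one, fun x => by simp⟩⟩

lemma blDist_le (m : ℕ) (hm : 1 ≤ m) (s : ℕ → Θ) :
    blDist (empMeas m s) (empMeas 1 s)
      ≤ ∑ j ∈ Finset.range (m - 1), min (dist (s (j+1)) (s j)) 2 := by
  apply ciSup_le
  rintro ⟨f, hf, hfb⟩
  simp only
  rw [integral_empMeas, integral_empMeas]
  have h1 : ((1:ℕ):ℝ)⁻¹ * ∑ i ∈ Finset.range 1, f (s i) = f (s 0) := by simp
  rw [h1]
  set B := ∑ j ∈ Finset.range (m-1), min (dist (s (j+1)) (s j)) 2 with hBdef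
  have hm0 : (m:ℝ) ≠ 0 := Nat.cast_ne_zero.2 (by omega)
  have hB0 : ∀ i ∈ Finset.range m, |f (s i) - f (s 0)| ≤ B := by
    intro i hi
    have h1 : |f (s i) - f (s 0)| ≤ dist (s i) (s 0) := by
      simpa [Real.dist_eq] using hf.dist_le_mul (s i) (s 0)
    have h2 : |f (s i) - f (s 0)| ≤ 2 := by
      calc |f (s i) - f (s 0)| = |f (s i) + -(f (s 0))| := by rw [sub_eq_add_neg]
        _ ≤ |f (s i)| + |-(f (s 0))| := abs_add_le _ _
        _ ≤ 1 + 1 := by rw [abs_neg]; exact add_le_add (hfb _) (hfb _)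
        _ = 2 := by norm_num
    refine (le_min h1 h2).trans ((min_dist_le_sum s i).trans ?_)
    apply Finset.sum_le_sum_of_subset_of_nonneg
    · exact Finset.range_subset_range.2 (by simp at hi; omega)
    · intro j _ _; exact le_min dist_nonneg (by norm_num)
  calc |(m:ℝ)⁻¹ * ∑ i ∈ Finset.range m, f (s i) - f (s 0)|
      = |(m:ℝ)⁻¹ * ∑ i ∈ Finset.range m, (f (s i) - f (s 0))| := by
        congr 1
        rw [Finset.sum_sub_distrib, mul_sub, Finset.sum_const, Finset.card_range,
          nsmul_eq_mul, ← mul_assoc, inv_mul_cancel₀ hm0, one_mul]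
    _ ≤ (m:ℝ)⁻¹ * ∑ i ∈ Finset.range m, |f (s i) - f (s 0)| := by
        rw [abs_mul, abs_of_nonneg (by positivity : (0:ℝ) ≤ (m:ℝ)⁻¹)]
        exact mul_le_mul_of_nonneg_left (Finset.abs_sum_le_sum_abs _ _) (by positivity)
    _ ≤ (m:ℝ)⁻¹ * ∑ _i ∈ Finset.range m, B := by
        gcongr with i hi
        exact hB0 i hi
    _ = B := by
        rw [Finset.sum_const, Finset.card_range, nsmul_eq_mul, ← mul_assoc,
          inv_mul_cancel₀ hm0, one_mul]
end


section
variable {S : Type*} [MeasurableSpace S]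

lemma markov_pair (M : Measure (ℕ → S)) (K : S → Measure S)
    (hM : ∀ (m : ℕ) (B : Set (Fin (m + 1) → S)), MeasurableSet B →
      ∀ (A : Set S), MeasurableSet A →
        M {s | (fun i : Fin (m + 1) => s i.1) ∈ B ∧ s (m + 1) ∈ A}
          = ∫⁻ s in {s | (fun i : Fin (m + 1) => s i.1) ∈ B}, K (s m) A ∂M)
    (j : ℕ) {E A : Set S} (hE : MeasurableSet E) (hA : MeasurableSet A) :
    M {s | s j ∈ E ∧ s (j+1) ∈ A} = ∫⁻ s in {s | s j ∈ E}, K (s j) A ∂M :=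
  hM j ((fun v : Fin (j+1) → S => v (Fin.last j)) ⁻¹' E)
    ((measurable_pi_apply (Fin.last j)) hE) A hA

end

section
variable {Θ : Type*} [MeasurableSpace Θ] [MetricSpace Θ] [OpensMeasurableSpace Θ]

lemma lemmaA {M : ℕ → Measure (ℕ → Θ)} (hMprob : ∀ n, IsProbabilityMeasure (M n))
    {K R : ℕ → Kernel Θ Θ}
    (hpair : ∀ (n j : ℕ) {E A : Set Θ}, MeasurableSet E → MeasurableSet A →
      M n {s | s j ∈ E ∧ s (j+1) ∈ A} = ∫⁻ s in {s | s j ∈ E}, (K n) (s j) A ∂(M n))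
    (hKR : ∀ (n : ℕ) (x : Θ) (ε' : ℝ), 0 < ε' →
      (K n) x (Metric.ball x ε')ᶜ ≤ (R n) x (Metric.ball x ε')ᶜ)
    (hRsup : ∀ Kc : Set Θ, IsCompact Kc → ∀ ε : ℝ, 0 < ε →
        Tendsto (fun n => ⨆ x ∈ Kc, (R n) x (Metric.ball x ε)ᶜ) atTop (𝓝 (0 : ℝ≥0∞)))
    {C : Set Θ} (hC : IsCompact C) {ε : ℝ} (hε : 0 < ε) (j : ℕ) :
    Tendsto (fun n => M n {s | s j ∈ C ∧ ε ≤ dist (s (j+1)) (s j)}) atTop (𝓝 (0:ℝ≥0∞)) := by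
  set ε3 := ε / 3 with hε3
  have hε3pos : 0 < ε3 := by positivity
  obtain ⟨t, ht⟩ := hC.elim_finite_subcover (fun x : Θ => Metric.ball x ε3)
    (fun _ => Metric.isOpen_ball)
    (fun x hx => Set.mem_iUnion.2 ⟨x, Metric.mem_ball_self hε3pos⟩)
  set Sn : ℕ → ℝ≥0∞ := fun n => ⨆ x ∈ C, (R n) x (Metric.ball x ε3)ᶜ with hSn
  have hsub : {s : ℕ → Θ | s j ∈ C ∧ ε ≤ dist (s (j+1)) (s j)} ⊆
      ⋃ x ∈ t, {s : ℕ → Θ | s j ∈ C ∩ Metric.ball x ε3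
        ∧ s (j+1) ∈ (Metric.ball x (2*ε3))ᶜ} := by
    rintro s ⟨hsC, hsd⟩
    obtain ⟨x, hxt, hx⟩ := by simpa using ht hsC
    refine Set.mem_iUnion₂.2 ⟨x, hxt, ⟨⟨hsC, hx⟩, ?_⟩⟩
    intro hball
    have h1 : dist (s (j+1)) (s j) ≤ dist (s (j+1)) x + dist x (s j) := dist_triangle _ _ _
    have h2 : dist (s (j+1)) x < 2 * ε3 := by simpa [Metric.mem_ball] using hball
    have h3 : dist x (s j) < ε3 := by
      rw [dist_comm]; simpa [Metric.mem_ball] using hx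
    rw [hε3] at h2 h3; linarith
  have hbound : ∀ n, M n {s : ℕ → Θ | s j ∈ C ∧ ε ≤ dist (s (j+1)) (s j)}
      ≤ (t.card : ℝ≥0∞) * Sn n := by
    intro n
    refine ((measure_mono hsub).trans (measure_biUnion_finset_le t _)).trans ?_
    have hterm : ∀ x ∈ t, M n {s : ℕ → Θ | s j ∈ C ∩ Metric.ball x ε3
        ∧ s (j+1) ∈ (Metric.ball x (2*ε3))ᶜ} ≤ Sn n := by
      intro x hxt
      have hE : MeasurableSet (C ∩ Metric.ball x ε3) :=
        (hC.isClosed.measurableSet).inter Metric.isOpen_ball.measurableSet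
      rw [hpair n j hE Metric.isOpen_ball.measurableSet.compl]
      have hmono : ∀ s ∈ {s : ℕ → Θ | s j ∈ C ∩ Metric.ball x ε3},
          (K n) (s j) (Metric.ball x (2*ε3))ᶜ ≤ Sn n := by
        rintro s hs
        obtain ⟨hsC, hsball⟩ := hs
        have hball_sub : Metric.ball (s j) ε3 ⊆ Metric.ball x (2*ε3) := by
          intro z hz
          have h1 : dist z (s j) < ε3 := by simpa [Metric.mem_ball] using hz
          have h2 : dist (s j) x < ε3 := by simpa [Metric.mem_ball] using hsball
          have := dist_triangle z (s j) x
          simp only [Metric.mem_ball]; linarith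
        calc (K n) (s j) (Metric.ball x (2*ε3))ᶜ
            ≤ (K n) (s j) (Metric.ball (s j) ε3)ᶜ :=
              measure_mono (Set.compl_subset_compl.2 hball_sub)
          _ ≤ (R n) (s j) (Metric.ball (s j) ε3)ᶜ := hKR n (s j) ε3 hε3pos
          _ ≤ Sn n := le_biSup (fun y => (R n) y (Metric.ball y ε3)ᶜ) hsC
      calc ∫⁻ s in {s : ℕ → Θ | s j ∈ C ∩ Metric.ball x ε3},
            (K n) (s j) (Metric.ball x (2*ε3))ᶜ ∂(M n)
          ≤ ∫⁻ _ in {s : ℕ → Θ | s j ∈ C ∩ Metric.ball x ε3}, Sn n ∂(M n) :=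
            setLIntegral_mono' ((measurable_pi_apply j) hE) hmono
        _ = Sn n * M n {s : ℕ → Θ | s j ∈ C ∩ Metric.ball x ε3} := setLIntegral_const _ _
        _ ≤ Sn n * 1 := by
            gcongr
            exact prob_le_one
        _ = Sn n := mul_one _
    calc ∑ x ∈ t, M n {s : ℕ → Θ | s j ∈ C ∩ Metric.ball x ε3
          ∧ s (j+1) ∈ (Metric.ball x (2*ε3))ᶜ}
        ≤ ∑ _x ∈ t, Sn n := Finset.sum_le_sum hterm
      _ = (t.card : ℝ≥0∞) * Sn n := by rw [Finset.sum_const, nsmul_eq_mul]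
  have hlim : Tendsto (fun n => (t.card : ℝ≥0∞) * Sn n) atTop (𝓝 0) := by
    have := ENNReal.Tendsto.const_mul (a := (t.card : ℝ≥0∞)) (hRsup C hC ε3 hε3pos)
      (Or.inr (ENNReal.natCast_ne_top _))
    simpa using this
  exact tendsto_of_tendsto_of_tendsto_of_le_of_le tendsto_const_nhds hlim
    (fun n => zero_le) hbound

end

section
variable {Θ : Type*} [MeasurableSpace Θ] [MetricSpace Θ] [ProperSpace Θ]
  [OpensMeasurableSpace Θ]

lemma lemmaC {M : ℕ → Measure (ℕ → Θ)} {μ : ℕ → Measure Θ}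
    (hmap : ∀ n, (M n).map (fun s => s 0) = μ n)
    (htight : ∀ ε : ℝ, 0 < ε → ∃ C : Set Θ, IsCompact C ∧ ∀ n, μ n Cᶜ ≤ ENNReal.ofReal ε)
    (hbadtend : ∀ (C : Set Θ), IsCompact C → ∀ ε : ℝ, 0 < ε → ∀ j : ℕ,
      Tendsto (fun n => M n {s | s j ∈ C ∧ ε ≤ dist (s (j+1)) (s j)}) atTop (𝓝 (0:ℝ≥0∞)))
    (j : ℕ) {ε : ℝ} (hε : 0 < ε) :
    Tendsto (fun n => M n {s : ℕ → Θ | ε ≤ dist (s (j+1)) (s j)}) atTop (𝓝 (0:ℝ≥0∞)) := by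
  rw [ENNReal.tendsto_atTop_zero]
  intro θ hθ
  have hθ2 : (0:ℝ≥0∞) < θ/2 := ENNReal.half_pos hθ.ne'
  have h1 : (0:ℝ≥0∞) < min θ 1 := lt_min hθ one_pos
  have h3 : min θ 1 / 2 ≠ ⊤ :=
    (ENNReal.div_lt_top (ne_top_of_le_ne_top ENNReal.one_ne_top (min_le_right _ _)) two_ne_zero).ne
  set δ : ℝ := (min θ 1 / 2).toReal with hδ
  have hδpos : 0 < δ := ENNReal.toReal_pos
    (by simp [ENNReal.div_eq_zero_iff, h1.ne']) h3
  have hofδ : ENNReal.ofReal δ ≤ θ/2 := by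
    rw [hδ, ENNReal.ofReal_toReal h3]
    exact ENNReal.div_le_div_right (min_le_left _ _) 2
  obtain ⟨C0, hC0c, hC0⟩ := htight δ hδpos
  set Cs : ℕ → Set Θ := fun i => Nat.rec C0 (fun _ Ci => Metric.cthickening 1 Ci) i with hCsdef
  have hCs : ∀ i, IsCompact (Cs i) := by
    intro i; induction i with
    | zero => exact hC0c
    | succ i ih => exact ih.cthickening
  set f : ℕ → ℝ≥0∞ := fun n =>
    (∑ i ∈ Finset.range j, M n {s : ℕ → Θ | s i ∈ Cs i ∧ 1 ≤ dist (s (i+1)) (s i)})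
    + M n {s : ℕ → Θ | s j ∈ Cs j ∧ ε ≤ dist (s (j+1)) (s j)} with hfdef
  have hf : Tendsto f atTop (𝓝 0) := by
    have hsum := tendsto_finset_sum (Finset.range j)
      (fun i _ => hbadtend (Cs i) (hCs i) 1 one_pos i)
    have h2 := hbadtend (Cs j) (hCs j) ε hε j
    simpa using hsum.add h2
  obtain ⟨N, hN⟩ := eventually_atTop.1 (hf.eventually_lt_const hθ2)
  refine ⟨N, fun n hn => ?_⟩
  have hincl : {s : ℕ → Θ | ε ≤ dist (s (j+1)) (s j)} ⊆
      ((fun s : ℕ → Θ => s 0) ⁻¹' C0ᶜ)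
      ∪ ((⋃ i ∈ Finset.range j, {s : ℕ → Θ | s i ∈ Cs i ∧ 1 ≤ dist (s (i+1)) (s i)})
        ∪ {s : ℕ → Θ | s j ∈ Cs j ∧ ε ≤ dist (s (j+1)) (s j)}) := by
    intro s hs
    by_cases h0 : s 0 ∈ C0
    · by_cases hbad : ∃ i ∈ Finset.range j, s i ∈ Cs i ∧ 1 ≤ dist (s (i+1)) (s i)
      · obtain ⟨i, hi1, hi2⟩ := hbad
        exact Or.inr (Or.inl (Set.mem_biUnion hi1 hi2))
      · push_neg at hbad
        have hstep : ∀ i, i < j → s i ∈ Cs i → s (i+1) ∈ Cs (i+1) := by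
          intro i hij hi
          have hd : dist (s (i+1)) (s i) ≤ 1 := by
            by_contra hcon
            push_neg at hcon
            exact absurd (hbad i (Finset.mem_range.2 hij) hi) (by push_neg; exact hcon.le)
          exact Metric.mem_cthickening_of_dist_le _ _ _ _ hi hd
        have hall : ∀ i, i ≤ j → s i ∈ Cs i := by
          intro i hi
          induction i with
          | zero => exact h0
          | succ i ih => exact hstep i (by omega) (ih (by omega))
        exact Or.inr (Or.inr ⟨hall j le_rfl, hs⟩)
    · exact Or.inl h0
  calc M n {s : ℕ → Θ | ε ≤ dist (s (j+1)) (s j)}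
      ≤ M n (((fun s : ℕ → Θ => s 0) ⁻¹' C0ᶜ))
        + M n ((⋃ i ∈ Finset.range j, {s : ℕ → Θ | s i ∈ Cs i ∧ 1 ≤ dist (s (i+1)) (s i)})
          ∪ {s : ℕ → Θ | s j ∈ Cs j ∧ ε ≤ dist (s (j+1)) (s j)}) :=
        (measure_mono hincl).trans (measure_union_le _ _)
    _ ≤ ENNReal.ofReal δ + f n := by
        apply add_le_add
        · have : M n ((fun s : ℕ → Θ => s 0) ⁻¹' C0ᶜ) = μ n C0ᶜ := by
            rw [← hmap n, Measure.map_apply (measurable_pi_apply 0)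
              hC0c.isClosed.measurableSet.compl]
          rw [this]; exact hC0 n
        · refine (measure_union_le _ _).trans ?_
          exact add_le_add (measure_biUnion_finset_le _ _) le_rfl
    _ ≤ θ/2 + θ/2 := add_le_add hofδ (hN n hn).le
    _ = θ := ENNReal.add_halves θ

section
variable {Θ : Type*} [MeasurableSpace Θ] [MetricSpace Θ] [OpensMeasurableSpace Θ] [SecondCountableTopology Θ]

lemma step_integrable {M : Measure (ℕ → Θ)} [IsProbabilityMeasure M] (j : ℕ) :
    Integrable (fun s : ℕ → Θ => min (dist (s (j+1)) (s j)) 2) M := by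
  have hmeas : Measurable (fun s : ℕ → Θ => min (dist (s (j+1)) (s j)) 2) :=
    ((measurable_pi_apply (j+1)).dist (measurable_pi_apply j)).min measurable_const
  refine (integrable_const (2:ℝ)).mono' hmeas.aestronglyMeasurable ?_
  filter_upwards with s
  rw [Real.norm_eq_abs, abs_of_nonneg (le_min dist_nonneg (by norm_num))]
  exact min_le_right _ _

lemma step_integral_tendsto {M : ℕ → Measure (ℕ → Θ)}
    (hMprob : ∀ n, IsProbabilityMeasure (M n)) (j : ℕ)
    (hC : ∀ ε : ℝ, 0 < ε →
      Tendsto (fun n => M n {s : ℕ → Θ | ε ≤ dist (s (j+1)) (s j)}) atTop (𝓝 (0:ℝ≥0∞))) :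
    Tendsto (fun n => ∫ s, min (dist (s (j+1)) (s j)) 2 ∂(M n)) atTop (𝓝 0) := by
  have hmeasd : Measurable (fun s : ℕ → Θ => dist (s (j+1)) (s j)) :=
    (measurable_pi_apply (j+1)).dist (measurable_pi_apply j)
  rw [Metric.tendsto_atTop]
  intro η hη
  set ε := η/4 with hεdef
  have hε : 0 < ε := by positivity
  set bad := {s : ℕ → Θ | ε ≤ dist (s (j+1)) (s j)} with hbaddef
  have hbadmeas : MeasurableSet bad := measurableSet_le measurable_const hmeasd
  have htoReal : Tendsto (fun n => (M n bad).toReal) atTop (𝓝 0) := by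
    have := (ENNReal.tendsto_toReal (by simp)).comp (hC ε hε)
    exact this
  have hev := htoReal.eventually_lt_const (show (0:ℝ) < η/4 by positivity)
  obtain ⟨N, hN⟩ := eventually_atTop.1 hev
  refine ⟨N, fun n hn => ?_⟩
  haveI := hMprob n
  have hnonneg : 0 ≤ ∫ s, min (dist (s (j+1)) (s j)) 2 ∂(M n) :=
    integral_nonneg fun s => le_min dist_nonneg (by norm_num)
  rw [Real.dist_eq, sub_zero, abs_of_nonneg hnonneg]
  have hptwise : ∀ s : ℕ → Θ, min (dist (s (j+1)) (s j)) 2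
      ≤ ε + bad.indicator (fun _ => (2:ℝ)) s := by
    intro s
    by_cases h : s ∈ bad
    · rw [Set.indicator_of_mem h]
      have := min_le_right (dist (s (j+1)) (s j)) (2:ℝ)
      linarith
    · rw [Set.indicator_of_notMem h]
      have h2 : dist (s (j+1)) (s j) < ε := by
        simpa [hbaddef, not_le] using h
      rw [add_zero]
      exact (min_le_left _ _).trans h2.le
  have hind : Integrable (bad.indicator (fun _ => (2:ℝ))) (M n) :=
    (integrable_const (2:ℝ)).indicator hbadmeas
  have hrhs : Integrable (fun s => ε + bad.indicator (fun _ => (2:ℝ)) s) (M n) :=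
    (integrable_const ε).add hind
  calc ∫ s, min (dist (s (j+1)) (s j)) 2 ∂(M n)
      ≤ ∫ s, (ε + bad.indicator (fun _ => (2:ℝ)) s) ∂(M n) :=
        integral_mono_of_nonneg
          (Filter.Eventually.of_forall fun s => le_min dist_nonneg (by norm_num))
          hrhs (Filter.Eventually.of_forall hptwise)
    _ = ε + (M n bad).toReal • (2:ℝ) := by
        rw [integral_add (integrable_const ε) hind, integral_const,
          integral_indicator_const _ hbadmeas]
        simp [Measure.real]
    _ < η := by
        have := hN n hn
        rw [smul_eq_mul, hεdef]
        nlinarith [ENNReal.toReal_nonneg (a := M n bad)]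

/-- Let `Θ = ℝ^p` and let `𝓜_n = (M_n, id)` be the non-random Markov
chain Monte Carlo procedure where `M_n` is the Markov measure generated by the initial
distribution `μ_n` and the transition kernel
`K_n(x,dy) = A_n(x) R_n(x,dy) + (1 - A_n(x)) δ_x(dy)`.  If `(μ_n)` is tight and
`sup_{x ∈ K} R_n(x, B_ε(x)ᶜ) → 0` for every compact `K` and every `ε > 0`,
then `(𝓜_n)` is degenerate. -/
theorem stmt2 {p : ℕ}
    (μ : ℕ → Measure (EuclideanSpace ℝ (Fin p)))
    (hμ : ∀ n, IsProbabilityMeasure (μ n))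
    (R : ℕ → Kernel (EuclideanSpace ℝ (Fin p)) (EuclideanSpace ℝ (Fin p)))
    (hR : ∀ n, IsMarkovKernel (R n))
    (A : ℕ → EuclideanSpace ℝ (Fin p) → ℝ)
    (hAmeas : ∀ n, Measurable (A n))
    (hA01 : ∀ n x, A n x ∈ Set.Ioo (0 : ℝ) 1)
    (K : ℕ → Kernel (EuclideanSpace ℝ (Fin p)) (EuclideanSpace ℝ (Fin p)))
    (hK : ∀ n, IsMarkovKernel (K n))
    (hKdef : ∀ n x, (K n) x
      = ENNReal.ofReal (A n x) • (R n) x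
        + ENNReal.ofReal (1 - A n x) • Measure.dirac x)
    (M : ℕ → Measure (ℕ → EuclideanSpace ℝ (Fin p)))
    (hMarkov : ∀ n, IsMarkovMeasureF (M n) (μ n) (fun x => (K n) x))
    (htight : TightSeq μ)
    (hRsup : ∀ Kc : Set (EuclideanSpace ℝ (Fin p)), IsCompact Kc →
      ∀ ε : ℝ, 0 < ε →
        Tendsto (fun n => ⨆ x ∈ Kc, (R n) x (Metric.ball x ε)ᶜ) atTop (𝓝 (0 : ℝ≥0∞))) :
    ∀ m : ℕ, 1 ≤ m →
      Tendsto (fun n => ∫ s, blDist (empMeas m s) (empMeas 1 s) ∂(M n))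
        atTop (𝓝 0) := by
  intro m hm
  have hMprob : ∀ n, IsProbabilityMeasure (M n) := by
    intro n
    constructor
    have h := congrArg (fun ν : Measure (EuclideanSpace ℝ (Fin p)) => ν Set.univ) (hMarkov n).1
    rw [Measure.map_apply (measurable_pi_apply 0) MeasurableSet.univ, Set.preimage_univ] at h
    haveI := hμ n
    rw [h]; exact measure_univ
  have hpair : ∀ (n j : ℕ) {E A' : Set (EuclideanSpace ℝ (Fin p))},
      MeasurableSet E → MeasurableSet A' →
      M n {s | s j ∈ E ∧ s (j+1) ∈ A'} = ∫⁻ s in {s | s j ∈ E}, (K n) (s j) A' ∂(M n) :=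
    fun n j _ _ hE hA' => markov_pair (M n) (fun x => (K n) x) (hMarkov n).2 j hE hA'
  have hKR : ∀ (n : ℕ) (x : EuclideanSpace ℝ (Fin p)) (ε' : ℝ), 0 < ε' →
      (K n) x (Metric.ball x ε')ᶜ ≤ (R n) x (Metric.ball x ε')ᶜ := by
    intro n x ε' hε'
    have hdirac : (Measure.dirac x) (Metric.ball x ε')ᶜ = 0 := by
      rw [Measure.dirac_apply' _ Metric.isOpen_ball.measurableSet.compl]
      simp [Metric.mem_ball_self hε']
    rw [hKdef n x, Measure.add_apply, Measure.smul_apply, Measure.smul_apply, hdirac]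
    simp only [smul_eq_mul, mul_zero, add_zero]
    exact mul_le_of_le_one_left zero_le (ENNReal.ofReal_le_one.2 (hA01 n x).2.le)
  have hbad : ∀ (C : Set (EuclideanSpace ℝ (Fin p))), IsCompact C → ∀ ε : ℝ, 0 < ε → ∀ j : ℕ,
      Tendsto (fun n => M n {s | s j ∈ C ∧ ε ≤ dist (s (j+1)) (s j)}) atTop (𝓝 (0:ℝ≥0∞)) :=
    fun C hC ε hε j => lemmaA hMprob hpair hKR hRsup hC hε j
  have hstepC : ∀ (j : ℕ) (ε : ℝ), 0 < ε →
      Tendsto (fun n => M n {s : ℕ → EuclideanSpace ℝ (Fin p) | ε ≤ dist (s (j+1)) (s j)})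
        atTop (𝓝 (0:ℝ≥0∞)) :=
    fun j ε hε => lemmaC (fun n => (hMarkov n).1) htight hbad j hε
  have hI : ∀ j : ℕ,
      Tendsto (fun n => ∫ s, min (dist (s (j+1)) (s j)) 2 ∂(M n)) atTop (𝓝 0) :=
    fun j => step_integral_tendsto hMprob j (fun ε hε => hstepC j ε hε)
  have hupper : Tendsto (fun n => ∑ j ∈ Finset.range (m-1),
      ∫ s, min (dist (s (j+1)) (s j)) 2 ∂(M n)) atTop (𝓝 0) := by
    have := tendsto_finset_sum (Finset.range (m-1)) (fun j _ => hI j)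
    simpa using this
  refine tendsto_of_tendsto_of_tendsto_of_le_of_le tendsto_const_nhds hupper ?_ ?_
  · intro n
    exact integral_nonneg fun s => Real.iSup_nonneg fun f => abs_nonneg _
  · intro n
    haveI := hMprob n
    calc ∫ s, blDist (empMeas m s) (empMeas 1 s) ∂(M n)
        ≤ ∫ s, ∑ j ∈ Finset.range (m-1), min (dist (s (j+1)) (s j)) 2 ∂(M n) :=
          integral_mono_of_nonneg
            (.of_forall fun s => Real.iSup_nonneg fun f => abs_nonneg _)
            (integrable_finset_sum _ fun j _ => step_integrable j)
            (.of_forall fun s => blDist_le m hm s)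
      _ = ∑ j ∈ Finset.range (m-1), ∫ s, min (dist (s (j+1)) (s j)) 2 ∂(M n) :=
          integral_finset_sum _ fun j _ => step_integrable j
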